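/- Let h(y) = ∏_{i=1}^n (y + k_i)^{a_i} with all k_i > 0 and degree a_+ ≥ 2. Then there exists y_0 > 0 such that h(y_0) = h'(y_0)·y_0, and for every κ > h'(y_0) the equation h(y) = κ·y has exactly two solutions in (0, ∞), both transversal (i.e., h'(y) ≠ κ at each solution). -/

import Mathlib

open Polynomial

theorem stmt4 (n : ℕ) (k : Fin n → ℝ) (hk : ∀ i, 0 < k i) (a : Fin n → ℕ)
    (ha : 2 ≤ ∑ i, a i)
    (h : ℝ[X]) (hh : h = ∏ i, (X + C (k i)) ^ a i) :
    ∃ y0 : ℝ, 0 < y0 ∧ h.eval y0 = (derivative h).eval y0 * y0 ∧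
      ∀ κ : ℝ, (derivative h).eval y0 < κ →
        ∃ y1 y2 : ℝ, 0 < y1 ∧ 0 < y2 ∧ y1 ≠ y2 ∧
          h.eval y1 = κ * y1 ∧ h.eval y2 = κ * y2 ∧
          (derivative h).eval y1 ≠ κ ∧ (derivative h).eval y2 ≠ κ ∧
          ∀ z : ℝ, 0 < z → h.eval z = κ * z → z = y1 ∨ z = y2 := by
  classical
  have heval : ∀ y : ℝ, h.eval y = ∏ i, (y + k i) ^ a i := by
    intro y; simp [hh, eval_prod]
  have hkpos : ∀ (y : ℝ) (i : Fin n), 0 ≤ y → 0 < y + k i := fun y i hy =>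
    add_pos_of_nonneg_of_pos hy (hk i)
  have hpos : ∀ y : ℝ, 0 ≤ y → 0 < h.eval y := by
    intro y hy; rw [heval]
    exact Finset.prod_pos fun i _ => pow_pos (hkpos y i hy) _
  -- derivative formula
  have hd : ∀ y : ℝ, (derivative h).eval y
      = ∑ i, (∏ j ∈ Finset.univ.erase i, (y + k j) ^ a j)
          * ((a i : ℝ) * (y + k i) ^ (a i - 1)) := by
    intro y
    have H1 : HasDerivAt (fun t : ℝ => h.eval t) ((derivative h).eval y) y := h.hasDerivAt y
    have H2 : HasDerivAt (fun t : ℝ => ∏ i, (t + k i) ^ a i)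
        (∑ i, (∏ j ∈ Finset.univ.erase i, (y + k j) ^ a j)
          • ((a i : ℝ) * (y + k i) ^ (a i - 1) * 1)) y := by
      exact HasDerivAt.fun_finsetProd fun i _ =>
        ((hasDerivAt_id y).add_const (k i)).pow (a i)
    have H2' : HasDerivAt (fun t : ℝ => h.eval t)
        (∑ i, (∏ j ∈ Finset.univ.erase i, (y + k j) ^ a j)
          • ((a i : ℝ) * (y + k i) ^ (a i - 1) * 1)) y := by
      simpa only [heval] using H2
    have := H1.unique H2'
    rw [this]
    simp [smul_eq_mul]
  -- the function u
  set u : ℝ → ℝ := fun y => ∑ i, (a i : ℝ) * (y / (y + k i)) with hu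
  have key : ∀ y : ℝ, 0 ≤ y → (derivative h).eval y * y = h.eval y * u y := by
    intro y hy
    rw [hd, heval, hu, Finset.sum_mul, Finset.mul_sum]
    refine Finset.sum_congr rfl fun i _ => ?_
    have hki : (0:ℝ) < y + k i := hkpos y i hy
    rcases Nat.eq_zero_or_pos (a i) with h0 | h1
    · simp [h0]
    · rw [← Finset.mul_prod_erase Finset.univ _ (Finset.mem_univ i)]
      have hpow : (y + k i) ^ a i = (y + k i) ^ (a i - 1) * (y + k i) := by
        rw [← pow_succ, Nat.sub_add_cancel h1]
      rw [hpow]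
      field_simp
  have u0 : u 0 = 0 := by simp [hu]
  obtain ⟨i0, hi0⟩ : ∃ i, 0 < a i := by
    by_contra hc
    push_neg at hc
    have : ∑ i, a i = 0 := Finset.sum_eq_zero fun i _ => Nat.le_zero.mp (hc i)
    omega
  have hfrac : ∀ (i : Fin n) {x y : ℝ}, 0 ≤ x → x < y → x / (x + k i) < y / (y + k i) := by
    intro i x y hx hxy
    have h1 : (0:ℝ) < x + k i := hkpos x i hx
    have h2 : (0:ℝ) < y + k i := hkpos y i (le_of_lt (lt_of_le_of_lt hx hxy))
    rw [div_lt_div_iff₀ h1 h2]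
    nlinarith [hk i]
  have umono : StrictMonoOn u (Set.Ici 0) := by
    intro x hx y hy hxy
    refine Finset.sum_lt_sum (fun i _ => ?_) ⟨i0, Finset.mem_univ i0, ?_⟩
    · exact mul_le_mul_of_nonneg_left (le_of_lt (hfrac i hx hxy)) (Nat.cast_nonneg _)
    · exact mul_lt_mul_of_pos_left (hfrac i0 hx hxy) (by exact_mod_cast hi0)
  have ucont : ContinuousOn u (Set.Ici 0) := by
    refine continuousOn_finset_sum _ fun i _ => continuousOn_const.mul ?_
    exact continuousOn_id.div ((continuous_id.add continuous_const).continuousOn)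
      fun y hy => ne_of_gt (hkpos y i hy)
  -- large value of u
  set Y : ℝ := 2 * (1 + ∑ i, k i) with hYdef
  have hksum : ∀ i, k i ≤ ∑ j, k j := fun i =>
    Finset.single_le_sum (f := k) (fun j _ => le_of_lt (hk j)) (Finset.mem_univ i)
  have hsumnn : (0:ℝ) ≤ ∑ j, k j := Finset.sum_nonneg fun j _ => le_of_lt (hk j)
  have hYpos : 0 < Y := by rw [hYdef]; linarith
  have hY2k : ∀ i, 2 * k i ≤ Y := by
    intro i; rw [hYdef]; have := hksum i; linarith [hk i]
  have uY : 1 < u Y := by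
    have hterm : ∀ i ∈ Finset.univ, (a i : ℝ) * (2/3 : ℝ) ≤ (a i : ℝ) * (Y / (Y + k i)) := by
      intro i _
      refine mul_le_mul_of_nonneg_left ?_ (Nat.cast_nonneg _)
      have h2 : (0:ℝ) < Y + k i := hkpos Y i (le_of_lt hYpos)
      rw [div_le_div_iff₀ (by norm_num) h2]
      have := hY2k i
      linarith
    have hsum : (2/3 : ℝ) * (∑ i, (a i : ℝ)) ≤ u Y := by
      rw [hu]
      calc (2/3 : ℝ) * (∑ i, (a i : ℝ)) = ∑ i, (a i : ℝ) * (2/3 : ℝ) := by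
            rw [Finset.mul_sum]; exact Finset.sum_congr rfl fun i _ => by ring
        _ ≤ _ := Finset.sum_le_sum hterm
    have hcast : (2 : ℝ) ≤ ∑ i, (a i : ℝ) := by
      have : ((∑ i, a i : ℕ) : ℝ) = ∑ i, (a i : ℝ) := by push_cast; ring
      rw [← this]; exact_mod_cast ha
    linarith
  -- find y0
  obtain ⟨y0, hy0mem, hy0⟩ : ∃ y0 ∈ Set.Ioo (0:ℝ) Y, u y0 = 1 := by
    have hsub : Set.Icc (0:ℝ) Y ⊆ Set.Ici 0 := fun x hx => hx.1
    have := intermediate_value_Ioo (le_of_lt hYpos) (ucont.mono hsub)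
    have h1 : (1:ℝ) ∈ Set.Ioo (u 0) (u Y) := by rw [u0]; exact ⟨one_pos, uY⟩
    obtain ⟨y0, hmem, heq⟩ := this h1
    exact ⟨y0, hmem, heq⟩
  have hy0pos : 0 < y0 := hy0mem.1
  have hmain : (derivative h).eval y0 * y0 = h.eval y0 := by
    have := key y0 (le_of_lt hy0pos)
    rw [hy0, mul_one] at this
    exact this
  have hdy0pos : 0 < (derivative h).eval y0 := by
    have h1 := hpos y0 (le_of_lt hy0pos)
    nlinarith
  refine ⟨y0, hy0pos, hmain.symm, ?_⟩
  intro κ hκ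
  have hκpos : 0 < κ := lt_trans hdy0pos hκ
  -- sign of u - 1
  have ulow : ∀ y : ℝ, 0 < y → y < y0 → u y < 1 := by
    intro y hy hyy0
    have := umono (Set.mem_Ici.mpr (le_of_lt hy)) (Set.mem_Ici.mpr (le_of_lt hy0pos)) hyy0
    rwa [hy0] at this
  have uhigh : ∀ y : ℝ, y0 < y → 1 < u y := by
    intro y hyy0
    have := umono (Set.mem_Ici.mpr (le_of_lt hy0pos))
      (Set.mem_Ici.mpr (le_of_lt (lt_trans hy0pos hyy0))) hyy0
    rwa [hy0] at this
  -- the function g = h(y)/y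
  set g : ℝ → ℝ := fun y => h.eval y / y with hg
  have hgderiv : ∀ y : ℝ, 0 < y →
      HasDerivAt g (((derivative h).eval y * y - h.eval y * 1) / y^2) y := by
    intro y hy
    exact (h.hasDerivAt y).div (hasDerivAt_id y) (ne_of_gt hy)
  have hderivg : ∀ y : ℝ, 0 < y → deriv g y = h.eval y * (u y - 1) / y^2 := by
    intro y hy
    rw [(hgderiv y hy).deriv]
    rw [mul_one]
    rw [key y (le_of_lt hy)]
    ring
  have gcont : ∀ s : Set ℝ, (∀ x ∈ s, x ≠ 0) → ContinuousOn g s := by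
    intro s hs
    exact (h.continuous.continuousOn).div continuousOn_id hs
  have ganti : StrictAntiOn g (Set.Ioc 0 y0) := by
    refine strictAntiOn_of_deriv_neg (convex_Ioc 0 y0)
      (gcont _ fun x hx => ne_of_gt hx.1) ?_
    intro x hx
    rw [interior_Ioc] at hx
    rw [hderivg x hx.1]
    apply div_neg_of_neg_of_pos
    · exact mul_neg_of_pos_of_neg (hpos x (le_of_lt hx.1))
        (by have := ulow x hx.1 hx.2; linarith)
    · exact pow_pos hx.1 2
  have gmono : StrictMonoOn g (Set.Ici y0) := by
    refine strictMonoOn_of_deriv_pos (convex_Ici y0)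
      (gcont _ fun x hx => ne_of_gt (lt_of_lt_of_le hy0pos hx)) ?_
    intro x hx
    rw [interior_Ici] at hx
    have hxpos : 0 < x := lt_trans hy0pos hx
    rw [hderivg x hxpos]
    apply div_pos
    · exact mul_pos (hpos x (le_of_lt hxpos)) (by have := uhigh x hx; linarith)
    · exact pow_pos hxpos 2
  have gval : ∀ z : ℝ, 0 < z → h.eval z = κ * z → g z = κ := by
    intro z hz hzeq
    rw [hg]
    simp only
    rw [hzeq, mul_div_assoc, div_self (ne_of_gt hz), mul_one]
  -- the polynomial p = h - κ X
  set p : ℝ[X] := h - C κ * X with hp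
  have hpeval : ∀ y : ℝ, p.eval y = h.eval y - κ * y := by
    intro y; simp [hp]
  have hroot : ∀ y : ℝ, p.eval y = 0 → h.eval y = κ * y := by
    intro y hy
    have := hpeval y
    rw [hy] at this
    linarith
  have hp0 : 0 < p.eval 0 := by
    rw [hpeval]; simpa using hpos 0 le_rfl
  have hpy0 : p.eval y0 < 0 := by
    rw [hpeval]
    nlinarith
  have hpcont : ContinuousOn (fun x : ℝ => p.eval x) (Set.Icc 0 y0) :=
    p.continuous.continuousOn
  -- y1
  obtain ⟨y1, hy1mem, hy1⟩ : ∃ y1 ∈ Set.Ioo (0:ℝ) y0, p.eval y1 = 0 := by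
    have := intermediate_value_Ioo' (le_of_lt hy0pos) hpcont
    have h0 : (0:ℝ) ∈ Set.Ioo (p.eval y0) (p.eval 0) := ⟨hpy0, hp0⟩
    obtain ⟨y1, hmem, heq⟩ := this h0
    exact ⟨y1, hmem, heq⟩
  -- degree facts
  have hmonic : h.Monic := by
    rw [hh]
    exact monic_prod_of_monic _ _ fun i _ => (monic_X_add_C _).pow _
  have hdegh : h.natDegree = ∑ i, a i := by
    rw [hh, natDegree_prod _ _ fun i _ => pow_ne_zero _ (X_add_C_ne_zero (k i))]
    simp [natDegree_pow]
  have hdeg1 : (1 : WithBot ℕ) < h.degree := by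
    rw [degree_eq_natDegree hmonic.ne_zero]
    exact_mod_cast (by omega : 1 < h.natDegree)
  have hqdeg : (C κ * X).degree < h.degree := lt_of_le_of_lt (degree_C_mul_X_le κ) hdeg1
  have hpmonic : p.Monic := hmonic.sub_of_left hqdeg
  have hpdeg : p.degree = h.degree := degree_sub_eq_left_of_degree_lt hqdeg
  have hpdegpos : 0 < p.degree := by
    rw [hpdeg]
    exact lt_trans (by norm_num) hdeg1
  have htend := p.tendsto_atTop_of_leadingCoeff_nonneg hpdegpos
    (by rw [hpmonic.leadingCoeff]; norm_num)
  obtain ⟨Y2, hY2a, hY2b⟩ : ∃ Y2, y0 < Y2 ∧ 0 < p.eval Y2 := by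
    have h1 := htend.eventually_gt_atTop 0
    have h2 := Filter.eventually_gt_atTop y0
    obtain ⟨Y2, hg0, hgy0⟩ := (h1.and h2).exists
    exact ⟨Y2, hgy0, hg0⟩
  obtain ⟨y2, hy2mem, hy2⟩ : ∃ y2 ∈ Set.Ioo y0 Y2, p.eval y2 = 0 := by
    have := intermediate_value_Ioo (le_of_lt hY2a)
      (p.continuous.continuousOn : ContinuousOn (fun x : ℝ => p.eval x) (Set.Icc y0 Y2))
    have h0 : (0:ℝ) ∈ Set.Ioo (p.eval y0) (p.eval Y2) := ⟨hpy0, hY2b⟩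
    obtain ⟨y2, hmem, heq⟩ := this h0
    exact ⟨y2, hmem, heq⟩
  have hy1pos : 0 < y1 := hy1mem.1
  have hy1lt : y1 < y0 := hy1mem.2
  have hy2gt : y0 < y2 := hy2mem.1
  have hy2pos : 0 < y2 := lt_trans hy0pos hy2gt
  have hsol1 : h.eval y1 = κ * y1 := hroot y1 hy1
  have hsol2 : h.eval y2 = κ * y2 := hroot y2 hy2
  have hueq : ∀ z : ℝ, 0 < z → h.eval z = κ * z → (derivative h).eval z = κ * u z := by
    intro z hz hze
    have hkz := key z (le_of_lt hz)
    rw [hze] at hkz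
    apply mul_right_cancel₀ (ne_of_gt hz)
    rw [hkz]; ring
  have ht1 : (derivative h).eval y1 ≠ κ := by
    rw [hueq y1 hy1pos hsol1]
    have hu1 : u y1 < 1 := ulow y1 hy1pos hy1lt
    exact ne_of_lt (by nlinarith)
  have ht2 : (derivative h).eval y2 ≠ κ := by
    rw [hueq y2 hy2pos hsol2]
    have hu2 : 1 < u y2 := uhigh y2 hy2gt
    exact ne_of_gt (by nlinarith)
  refine ⟨y1, y2, hy1pos, hy2pos, ne_of_lt (lt_trans hy1lt hy2gt), hsol1, hsol2, ht1, ht2, ?_⟩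
  intro z hz hzeq
  rcases lt_trichotomy z y0 with hlt | hzeq0 | hgt
  · left
    exact ganti.injOn ⟨hz, le_of_lt hlt⟩ ⟨hy1pos, le_of_lt hy1lt⟩
      (by rw [gval z hz hzeq, gval y1 hy1pos hsol1])
  · exfalso
    subst hzeq0
    nlinarith
  · right
    exact gmono.injOn (Set.mem_Ici.mpr (le_of_lt hgt)) (Set.mem_Ici.mpr (le_of_lt hy2gt))
      (by rw [gval z hz hzeq, gval y2 hy2pos hsol2])
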